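/- Let p0, p1 ∈ (0,1) and θ > 0 with θ ≠ 1. Define δ = (1 + (θ-1)(p0+p1))² - 4θ(θ-1)p0p1 and e11 = (1 + (θ-1)(p0+p1) - √δ) / (2(θ-1)). Then max(0, p0 + p1 - 1) ≤ e11 ≤ min(p0, p1), i.e., e11 lies within the Fréchet–Hoeffding bounds for a joint probability with margins p0 and p1. -/
import Mathlib

set_option maxHeartbeats 1000000

private lemma sqrt_ge_aux {L d : ℝ} (h : L ^ 2 ≤ d) : L ≤ Real.sqrt d :=
  le_trans (le_abs_self L)
    (by rw [← Real.sqrt_sq_eq_abs]; exact Real.sqrt_le_sqrt h)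

private lemma sqrt_le_aux {L d : ℝ} (hL : 0 ≤ L) (h : d ≤ L ^ 2) : Real.sqrt d ≤ L := by
  rw [← Real.sqrt_sq hL]; exact Real.sqrt_le_sqrt h

theorem e11_frechet_bounds (p0 p1 θ : ℝ) (hp0 : p0 ∈ Set.Ioo (0:ℝ) 1)
    (hp1 : p1 ∈ Set.Ioo (0:ℝ) 1) (hθ : 0 < θ) (hθ1 : θ ≠ 1) :
    let δ := (1 + (θ - 1) * (p0 + p1)) ^ 2 - 4 * θ * (θ - 1) * p0 * p1
    let e11 := (1 + (θ - 1) * (p0 + p1) - Real.sqrt δ) / (2 * (θ - 1))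
    max 0 (p0 + p1 - 1) ≤ e11 ∧ e11 ≤ min p0 p1 := by
  obtain ⟨hp00, hp01⟩ := hp0
  obtain ⟨hp10, hp11⟩ := hp1
  intro δ e11
  have hδ : δ = (1 + (θ - 1) * (p0 + p1)) ^ 2 - 4 * θ * (θ - 1) * p0 * p1 := rfl
  have he : e11 = (1 + (θ - 1) * (p0 + p1) - Real.sqrt δ) / (2 * (θ - 1)) := rfl
  clear_value δ e11
  rcases lt_or_gt_of_ne hθ1 with hB | hA
  · -- θ < 1
    have ht : 2 * (θ - 1) < 0 := by linarith
    -- products we will use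
    have m1 : 0 < θ * p1 := mul_pos hθ hp10
    have m0 : 0 < θ * p0 := mul_pos hθ hp00
    have m2 : 0 < (1 - θ) * p0 := mul_pos (by linarith) hp00
    have m3 : 0 < (1 - θ) * p1 := mul_pos (by linarith) hp10
    have m4 : 0 < θ * (1 - θ) * (p0 * p1) :=
      mul_pos (mul_pos hθ (by linarith)) (mul_pos hp00 hp10)
    have m5 : 0 < θ * (1 - θ) * ((1 - p0) * (1 - p1)) :=
      mul_pos (mul_pos hθ (by linarith)) (mul_pos (by linarith) (by linarith))
    have h1 : e11 ≤ p0 := by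
      rw [he, div_le_iff_of_neg ht]
      have hL : (0:ℝ) ≤ 1 + (θ - 1) * (p1 - p0) := by nlinarith
      have hs : Real.sqrt δ ≤ 1 + (θ - 1) * (p1 - p0) := by
        refine sqrt_le_aux hL ?_
        have : δ = (1 + (θ - 1) * (p1 - p0)) ^ 2 + 4 * (θ - 1) * p0 * (1 - p1) := by
          rw [hδ]; ring
        nlinarith [mul_pos (mul_pos (by linarith : (0:ℝ) < 4 * (1 - θ)) hp00)
          (by linarith : (0:ℝ) < 1 - p1)]
      nlinarith
    have h2 : e11 ≤ p1 := by
      rw [he, div_le_iff_of_neg ht]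
      have hL : (0:ℝ) ≤ 1 + (θ - 1) * (p0 - p1) := by nlinarith
      have hs : Real.sqrt δ ≤ 1 + (θ - 1) * (p0 - p1) := by
        refine sqrt_le_aux hL ?_
        have : δ = (1 + (θ - 1) * (p0 - p1)) ^ 2 + 4 * (θ - 1) * p1 * (1 - p0) := by
          rw [hδ]; ring
        nlinarith [mul_pos (mul_pos (by linarith : (0:ℝ) < 4 * (1 - θ)) hp10)
          (by linarith : (0:ℝ) < 1 - p0)]
      nlinarith
    have h3 : (0:ℝ) ≤ e11 := by
      rw [he, le_div_iff_of_neg ht]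
      have hs : 1 + (θ - 1) * (p0 + p1) ≤ Real.sqrt δ := by
        refine sqrt_ge_aux ?_
        rw [hδ]; nlinarith
      linarith
    have h4 : p0 + p1 - 1 ≤ e11 := by
      rw [he, le_div_iff_of_neg ht]
      have hs : 1 + (θ - 1) * (2 - (p0 + p1)) ≤ Real.sqrt δ := by
        refine sqrt_ge_aux ?_
        rw [hδ]; nlinarith
      nlinarith
    exact ⟨max_le h3 h4, le_min h1 h2⟩
  · -- 1 < θ
    have ht : (0:ℝ) < 2 * (θ - 1) := by linarith
    have m4 : 0 < θ * (θ - 1) * (p0 * p1) :=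
      mul_pos (mul_pos hθ (by linarith)) (mul_pos hp00 hp10)
    have m5 : 0 < θ * (θ - 1) * ((1 - p0) * (1 - p1)) :=
      mul_pos (mul_pos hθ (by linarith)) (mul_pos (by linarith) (by linarith))
    have h1 : e11 ≤ p0 := by
      rw [he, div_le_iff₀ ht]
      have hs : 1 + (θ - 1) * (p1 - p0) ≤ Real.sqrt δ := by
        refine sqrt_ge_aux ?_
        have hid : δ = (1 + (θ - 1) * (p1 - p0)) ^ 2 + 4 * (θ - 1) * p0 * (1 - p1) := by
          rw [hδ]; ring
        rw [hid]
        nlinarith [mul_pos (mul_pos (by linarith : (0:ℝ) < 4 * (θ - 1)) hp00)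
          (by linarith : (0:ℝ) < 1 - p1)]
      nlinarith
    have h2 : e11 ≤ p1 := by
      rw [he, div_le_iff₀ ht]
      have hs : 1 + (θ - 1) * (p0 - p1) ≤ Real.sqrt δ := by
        refine sqrt_ge_aux ?_
        have hid : δ = (1 + (θ - 1) * (p0 - p1)) ^ 2 + 4 * (θ - 1) * p1 * (1 - p0) := by
          rw [hδ]; ring
        rw [hid]
        nlinarith [mul_pos (mul_pos (by linarith : (0:ℝ) < 4 * (θ - 1)) hp10)
          (by linarith : (0:ℝ) < 1 - p0)]
      nlinarith
    have h3 : (0:ℝ) ≤ e11 := by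
      rw [he, le_div_iff₀ ht]
      have hL : (0:ℝ) ≤ 1 + (θ - 1) * (p0 + p1) := by
        nlinarith [mul_pos (by linarith : (0:ℝ) < θ - 1) (by linarith : (0:ℝ) < p0 + p1)]
      have hs : Real.sqrt δ ≤ 1 + (θ - 1) * (p0 + p1) := by
        refine sqrt_le_aux hL ?_
        have hid : δ = (1 + (θ - 1) * (p0 + p1)) ^ 2 - 4 * (θ * (θ - 1) * (p0 * p1)) := by
          rw [hδ]; ring
        rw [hid]; nlinarith [m4]
      linarith
    have h4 : p0 + p1 - 1 ≤ e11 := by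
      rw [he, le_div_iff₀ ht]
      have hL : (0:ℝ) ≤ 1 + (θ - 1) * (2 - (p0 + p1)) := by
        nlinarith [mul_pos (by linarith : (0:ℝ) < θ - 1) (by linarith : (0:ℝ) < 2 - (p0 + p1))]
      have hs : Real.sqrt δ ≤ 1 + (θ - 1) * (2 - (p0 + p1)) := by
        refine sqrt_le_aux hL ?_
        have hid : δ = (1 + (θ - 1) * (2 - (p0 + p1))) ^ 2 - 4 * (θ * (θ - 1) * ((1 - p0) * (1 - p1))) := by
          rw [hδ]; ring
        rw [hid]; nlinarith [m5]
      nlinarith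
    exact ⟨max_le h3 h4, le_min h1 h2⟩
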